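/- The functions I₁ = N' − K' + K² + N² − NK and I₂ = 3(N'K − K'N) − 2(K³ + N³) + 3(K²N + N²K) are first integrals of the ODE system −2K'' + N'' + 6KK' − 3KN' = 0, K'' − 2N'' + 3NK' − 6NN' = 0; that is, for any C²-solutions K(t), N(t) of the system, dI₁/dt = 0 and dI₂/dt = 0. -/

import Mathlib

/-- `I₁ = N' − K' + K² + N² − NK` and
`I₂ = 3(N'K − K'N) − 2(K³ + N³) + 3(K²N + N²K)` are first integrals of the
system `−2K'' + N'' + 6KK' − 3KN' = 0`, `K'' − 2N'' + 3NK' − 6NN' = 0`. -/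
theorem first_integrals_of_reduced_system
    (K N : ℝ → ℂ) (hK : ContDiff ℝ 2 K) (hN : ContDiff ℝ 2 N)
    (heq1 : ∀ t, -2 * deriv (deriv K) t + deriv (deriv N) t
        + 6 * K t * deriv K t - 3 * K t * deriv N t = 0)
    (heq2 : ∀ t, deriv (deriv K) t - 2 * deriv (deriv N) t
        + 3 * N t * deriv K t - 6 * N t * deriv N t = 0) :
    (∀ t, deriv (fun s => deriv N s - deriv K s + (K s)^2 + (N s)^2
        - N s * K s) t = 0) ∧
    (∀ t, deriv (fun s => 3 * (deriv N s * K s - deriv K s * N s)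
        - 2 * ((K s)^3 + (N s)^3) + 3 * ((K s)^2 * N s + (N s)^2 * K s)) t = 0) := by
  have hK2 : ContDiff ℝ ((1 : WithTop ℕ∞) + 1) K := by norm_num; exact hK
  have hN2 : ContDiff ℝ ((1 : WithTop ℕ∞) + 1) N := by norm_num; exact hN
  have hKd : Differentiable ℝ K := hK.differentiable (by norm_num)
  have hNd : Differentiable ℝ N := hN.differentiable (by norm_num)
  have hKd' : Differentiable ℝ (deriv K) :=
    ((contDiff_succ_iff_deriv.mp hK2).2.2).differentiable (by norm_num)
  have hNd' : Differentiable ℝ (deriv N) :=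
    ((contDiff_succ_iff_deriv.mp hN2).2.2).differentiable (by norm_num)
  constructor <;> intro t <;>
    [skip; skip] <;> (
    have hdK : HasDerivAt K (deriv K t) t := (hKd t).hasDerivAt
    have hdN : HasDerivAt N (deriv N t) t := (hNd t).hasDerivAt
    have hdK' : HasDerivAt (deriv K) (deriv (deriv K) t) t := (hKd' t).hasDerivAt
    have hdN' : HasDerivAt (deriv N) (deriv (deriv N) t) t := (hNd' t).hasDerivAt)
  · have h : HasDerivAt (fun s => deriv N s - deriv K s + (K s)^2 + (N s)^2 - N s * K s)
        (deriv (deriv N) t - deriv (deriv K) t + 2 * K t * deriv K t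
          + 2 * N t * deriv N t - (deriv N t * K t + N t * deriv K t)) t := by
      have := (((hdN'.sub hdK').add
          (hdK.mul hdK)).add (hdN.mul hdN)).sub
          ((hdN).mul (hdK))
      convert this using 1
      · exact rfl
      · funext s; simp only [Pi.add_apply, Pi.sub_apply, Pi.mul_apply]; ring
      · ring
    rw [h.deriv]
    linear_combination (heq1 t + 2 * heq2 t) / (-3 : ℂ) - (2 * heq1 t + heq2 t) / (-3 : ℂ)
  · have h : HasDerivAt (fun s => 3 * (deriv N s * K s - deriv K s * N s)
        - 2 * ((K s)^3 + (N s)^3) + 3 * ((K s)^2 * N s + (N s)^2 * K s))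
        (3 * ((deriv (deriv N) t * K t + deriv N t * deriv K t)
          - (deriv (deriv K) t * N t + deriv K t * deriv N t))
        - 2 * (3 * K t ^ 2 * deriv K t + 3 * N t ^ 2 * deriv N t)
        + 3 * ((2 * K t * deriv K t * N t + (K t)^2 * deriv N t)
          + (2 * N t * deriv N t * K t + (N t)^2 * deriv K t))) t := by
      have := ((((hdN'.mul hdK).sub
          (hdK'.mul hdN)).const_mul (3:ℂ)).sub
          ((((hdK.mul hdK).mul hdK).add ((hdN.mul hdN).mul hdN)).const_mul (2:ℂ))).add
          ((((hdK.mul hdK).mul (hdN)).add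
            ((hdN.mul hdN).mul (hdK))).const_mul (3:ℂ))
      convert this using 1
      · exact rfl
      · funext s; simp only [Pi.add_apply, Pi.sub_apply, Pi.mul_apply]; ring
      · simp only [Pi.mul_apply]; ring
    rw [h.deriv]
    linear_combination (K t) * (heq1 t + 2 * heq2 t) * (-1) - (N t) * (2 * heq1 t + heq2 t) * (-1)
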